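/- Let (Ω, 𝔽, P) be a probability space, α ∈ ℝ, δ ∈ (0,1). Let R : ℝ → ℝ be nonincreasing and let Û : Ω × ℝ → ℝ be such that Û(·, λ) is measurable for each λ and P({ω : R(λ) ≤ Û(ω, λ)}) ≥ 1 − δ for every λ ∈ ℝ (pointwise upper confidence bound). For each ω suppose the set S(ω) = {λ : Û(ω, λ') ≤ α for all λ' ≥ λ} is nonempty and bounded below, define λ̂(ω) = inf S(ω), and assume λ̂ is measurable. Suppose the set {λ : R(λ) > α} is nonempty and bounded above, let λ* = sup{λ : R(λ) > α}, and assume R(λ*) ≤ α. Then P({ω : R(λ̂(ω)) > α}) ≤ δ. -/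

import Mathlib

open MeasureTheory

/-- Abstract calibration theorem for risk-controlling prediction sets: if `R` is a
nonincreasing risk function, `U` is a pointwise `1 - δ` upper confidence bound for `R`,
and `lamHat ω` is the infimum of the set of `λ` such that `U ω` stays below `α` on
`[λ, ∞)`, then the risk at the calibrated threshold exceeds `α` with probability
at most `δ`. -/
theorem calibrated_threshold_controls_risk
    {Ω : Type*} [MeasurableSpace Ω] (P : Measure Ω) [IsProbabilityMeasure P]
    (α δ : ℝ) (hδ : δ ∈ Set.Ioo (0 : ℝ) 1)
    (R : ℝ → ℝ) (hR : Antitone R)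
    (U : Ω → ℝ → ℝ) (hUmeas : ∀ lam : ℝ, Measurable fun ω => U ω lam)
    (hUCB : ∀ lam : ℝ, P {ω | R lam ≤ U ω lam} ≥ 1 - ENNReal.ofReal δ)
    (S : Ω → Set ℝ) (hSdef : ∀ ω, S ω = {lam | ∀ lam' ≥ lam, U ω lam' ≤ α})
    (hSne : ∀ ω, (S ω).Nonempty) (hSbdd : ∀ ω, BddBelow (S ω))
    (lamHat : Ω → ℝ) (hlamHat : ∀ ω, lamHat ω = sInf (S ω))
    (hlamHatMeas : Measurable lamHat)
    (hne : {lam | R lam > α}.Nonempty) (hbdd : BddAbove {lam | R lam > α})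
    (lamStar : ℝ) (hlamStar : lamStar = sSup {lam | R lam > α})
    (hRstar : R lamStar ≤ α) :
    P {ω | R (lamHat ω) > α} ≤ ENNReal.ofReal δ := by
  obtain ⟨hδ0, hδ1⟩ := hδ
  have hiff : ∀ x : ℝ, R x > α ↔ x < lamStar := by
    intro x
    constructor
    · intro hx
      have hle : x ≤ lamStar := hlamStar ▸ le_csSup hbdd hx
      rcases lt_or_eq_of_le hle with h | h
      · exact h
      · exact absurd (h ▸ hx) (not_lt.mpr hRstar)
    · intro hx
      obtain ⟨y, hy, hxy⟩ := exists_lt_of_lt_csSup hne (hlamStar ▸ hx)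
      exact lt_of_lt_of_le hy (hR hxy.le)
  set c : ℕ → ℝ := fun n => lamStar - 1 / (n + 1) with hc
  have hcn : ∀ n : ℕ, c n < lamStar := by
    intro n
    have : (0:ℝ) < 1 / (n + 1) := by positivity
    simp only [hc]
    linarith
  have hsub : ∀ n, {ω | lamHat ω < c n} ⊆ {ω | U ω (c n) < R (c n)} := by
    intro n ω hω
    have h1 : sInf (S ω) < c n := (hlamHat ω) ▸ hω
    obtain ⟨lam, hlam, hlt⟩ := exists_lt_of_csInf_lt (hSne ω) h1
    have hmem : ∀ lam' ≥ lam, U ω lam' ≤ α := by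
      have := hlam; rw [hSdef ω] at this; exact this
    have hU : U ω (c n) ≤ α := hmem (c n) hlt.le
    exact lt_of_le_of_lt hU ((hiff (c n)).2 (hcn n))
  have hbound : ∀ n, P {ω | lamHat ω < c n} ≤ ENNReal.ofReal δ := by
    intro n
    refine le_trans (measure_mono (hsub n)) ?_
    have hmeas : MeasurableSet {ω | R (c n) ≤ U ω (c n)} :=
      measurableSet_le measurable_const (hUmeas (c n))
    have heq : {ω | U ω (c n) < R (c n)} = {ω | R (c n) ≤ U ω (c n)}ᶜ := by
      ext ω; simp [not_le]
    rw [heq, measure_compl hmeas (measure_ne_top _ _)]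
    have h1 : P {ω | R (c n) ≤ U ω (c n)} ≥ 1 - ENNReal.ofReal δ := hUCB (c n)
    have h2 : (1 : ENNReal) - P {ω | R (c n) ≤ U ω (c n)} ≤ 1 - (1 - ENNReal.ofReal δ) :=
      tsub_le_tsub_left h1 1
    calc P Set.univ - P {ω | R (c n) ≤ U ω (c n)}
        = 1 - P {ω | R (c n) ≤ U ω (c n)} := by rw [measure_univ]
      _ ≤ 1 - (1 - ENNReal.ofReal δ) := h2
      _ = ENNReal.ofReal δ := ENNReal.sub_sub_cancel ENNReal.one_ne_top
          (ENNReal.ofReal_le_one.mpr hδ1.le)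
  have hE : {ω | R (lamHat ω) > α} = ⋃ n, {ω | lamHat ω < c n} := by
    ext ω
    simp only [Set.mem_setOf_eq, Set.mem_iUnion, hiff]
    constructor
    · intro h
      obtain ⟨n, hn⟩ := exists_nat_one_div_lt (sub_pos.mpr h)
      refine ⟨n, ?_⟩
      have : (1:ℝ)/(n+1) < lamStar - lamHat ω := by exact_mod_cast hn
      simp only [hc]; linarith
    · rintro ⟨n, hn⟩; exact hn.trans (hcn n)
  have hmonoc : Monotone c := by
    intro m n hmn
    simp only [hc]
    have hmn' : (m:ℝ) ≤ n := Nat.cast_le.mpr hmn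
    have h1 : (1:ℝ)/(n+1) ≤ 1/(m+1) := by
      apply one_div_le_one_div_of_le (by positivity)
      linarith
    linarith
  have hmono : Monotone (fun n => {ω | lamHat ω < c n}) := by
    intro m n hmn ω hω
    exact lt_of_lt_of_le hω (hmonoc hmn)
  rw [hE, Directed.measure_iUnion hmono.directed_le]
  exact iSup_le hbound
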